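/- arXiv:0704.0099 — 2 statements merged into one kernel-verified Lean document; each statement's English description precedes it below -/
import Mathlib

section
/- Let A and B be n×n positive semidefinite complex matrices such that A − ‖B‖·I is positive semidefinite (where ‖B‖ is the operator norm of B). Let g : [0,∞) → ℝ be non-negative, monotonically increasing and concave. Then for every index k, the k-th largest eigenvalue of g(A) − g(B) is at most the k-th largest eigenvalue of g(A − B); that is, λ_k↓(g(A) − g(B)) ≤ λ_k↓(g(A − B)) for all k. -/
open Matrix
open scoped ComplexOrder

/-- The eigenvalues of a square matrix, sorted in non-increasing order
(junk value `0` if the matrix is not Hermitian). -/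
noncomputable def eigValsDown {𝕜 : Type*} [RCLike 𝕜] {n : ℕ}
    (A : Matrix (Fin n) (Fin n) 𝕜) : Fin n → ℝ :=
  if hA : A.IsHermitian then
    fun k => (hA.eigenvalues ∘ Tuple.sort hA.eigenvalues) k.rev
  else 0

/-- Functional calculus: apply a real function to a Hermitian matrix via its spectral
decomposition (junk value `0` if the matrix is not Hermitian). -/
noncomputable def matFun {𝕜 : Type*} [RCLike 𝕜] {n : ℕ} (h : ℝ → ℝ)
    (A : Matrix (Fin n) (Fin n) 𝕜) : Matrix (Fin n) (Fin n) 𝕜 :=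
  if hA : A.IsHermitian then
    (hA.eigenvectorUnitary : Matrix (Fin n) (Fin n) 𝕜) *
      Matrix.diagonal (fun i => (h (hA.eigenvalues i) : 𝕜)) *
      star (hA.eigenvectorUnitary : Matrix (Fin n) (Fin n) 𝕜)
  else 0

/-- The operator norm (largest singular value) of a matrix. -/
noncomputable def opNorm {𝕜 : Type*} [RCLike 𝕜] {n : ℕ}
    (A : Matrix (Fin n) (Fin n) 𝕜) : ℝ :=
  ‖Matrix.toEuclideanCLM (𝕜 := 𝕜) A‖

/-- The matrix absolute value `|M| = (Mᴴ M)^(1/2)`. -/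
noncomputable def matAbs {𝕜 : Type*} [RCLike 𝕜] {n : ℕ}
    (A : Matrix (Fin n) (Fin n) 𝕜) : Matrix (Fin n) (Fin n) 𝕜 :=
  ((Matrix.posSemidef_conjTranspose_mul_self A).1.eigenvectorUnitary : Matrix (Fin n) (Fin n) 𝕜) *
    Matrix.diagonal ((↑) ∘ Real.sqrt ∘ (Matrix.posSemidef_conjTranspose_mul_self A).1.eigenvalues) *
    (star (Matrix.posSemidef_conjTranspose_mul_self A).1.eigenvectorUnitary : Matrix (Fin n) (Fin n) 𝕜)

/-- The Ky Fan `k`-norm: the sum of the `k` largest singular values. -/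
noncomputable def kyFanNorm {𝕜 : Type*} [RCLike 𝕜] {n : ℕ} (k : ℕ)
    (A : Matrix (Fin n) (Fin n) 𝕜) : ℝ :=
  ∑ j ∈ Finset.univ.filter (fun j : Fin n => (j : ℕ) < k), eigValsDown (matAbs A) j

namespace Stmt0Aux

open Finset

lemma concave_four {g : ℝ → ℝ} (hg : ConcaveOn ℝ (Set.Ici (0:ℝ)) g)
    {a b β : ℝ} (h0 : 0 ≤ β) (hb : β ≤ b) (hba : b ≤ a) :
    g a + g (b - β) ≤ g b + g (a - β) := by
  rcases eq_or_lt_of_le (show (0:ℝ) ≤ a - b + β by linarith) with h | h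
  · rw [show β = 0 by linarith, show a = b by linarith]
  · set D := a - b + β with hD
    set t := β / D with ht
    set s := (a - b) / D with hs
    have hts : s + t = 1 := by
      rw [hs, ht, ← add_div, div_eq_one_iff_eq h.ne']
    have ht0 : 0 ≤ t := div_nonneg h0 h.le
    have hs0 : 0 ≤ s := div_nonneg (by linarith) h.le
    have hmem1 : b - β ∈ Set.Ici (0:ℝ) := by simp; linarith
    have hmem2 : a ∈ Set.Ici (0:ℝ) := by simp; linarith
    have h1 := hg.2 hmem1 hmem2 hs0 ht0 hts
    have h2 := hg.2 hmem1 hmem2 ht0 hs0 (by linarith)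
    have e1 : s • (b - β) + t • a = b := by
      simp only [smul_eq_mul, hs, ht]; field_simp; ring
    have e2 : t • (b - β) + s • a = a - β := by
      simp only [smul_eq_mul, hs, ht]; field_simp; ring
    rw [e1] at h1; rw [e2] at h2
    simp only [smul_eq_mul] at h1 h2
    have e3 : (s + t) * (g (b - β) + g a) =
        s * g (b - β) + t * g a + (t * g (b - β) + s * g a) := by ring
    rw [hts, one_mul] at e3
    linarith [add_le_add h1 h2]

variable {n : ℕ}

/-- quadratic form equals weighted sum of eigenvalues -/
lemma quadform_eq (v : OrthonormalBasis (Fin n) ℂ (EuclideanSpace ℂ (Fin n)))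
    (M : Matrix (Fin n) (Fin n) ℂ) (c : Fin n → ℝ)
    (h : ∀ j, M *ᵥ ⇑(v j) = (c j : ℂ) • ⇑(v j)) (x : EuclideanSpace ℂ (Fin n)) :
    RCLike.re (inner ℂ x (toEuclideanLin M x) : ℂ) = ∑ j, c j * ‖v.repr x j‖ ^ 2 := by
  have hT : ∀ j, toEuclideanLin M (v j) = (c j : ℂ) • (v j) := by
    intro j
    apply (WithLp.equiv 2 (Fin n → ℂ)).injective
    simpa using h j
  have hx : toEuclideanLin M x = ∑ j, (v.repr x j * (c j : ℂ)) • v j := by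
    conv_lhs => rw [← v.sum_repr x, map_sum]
    refine Finset.sum_congr rfl fun j _ => ?_
    rw [_root_.map_smul, hT j, smul_smul]
  rw [hx, inner_sum]
  rw [map_sum]
  refine Finset.sum_congr rfl fun j _ => ?_
  rw [inner_smul_right, ← inner_conj_symm, ← v.repr_apply_apply]
  have : (starRingEnd ℂ) (v.repr x j) * v.repr x j = (‖v.repr x j‖ ^ 2 : ℝ) := by
    rw [mul_comm, RCLike.mul_conj]
    norm_cast
  calc RCLike.re (v.repr x j * (c j : ℂ) * (starRingEnd ℂ) (v.repr x j))
      = RCLike.re ((c j : ℂ) * ((starRingEnd ℂ) (v.repr x j) * v.repr x j)) := by ring_nf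
    _ = c j * ‖v.repr x j‖ ^ 2 := by rw [this]; norm_cast

lemma parseval (v : OrthonormalBasis (Fin n) ℂ (EuclideanSpace ℂ (Fin n)))
    (x : EuclideanSpace ℂ (Fin n)) :
    ∑ j, ‖v.repr x j‖ ^ 2 = ‖x‖ ^ 2 := by
  have h1 : ‖v.repr x‖ = ‖x‖ := v.repr.norm_map x
  have h2 : ‖v.repr x‖ ^ 2 = ∑ j, ‖v.repr x j‖ ^ 2 := by
    rw [EuclideanSpace.norm_eq]
    rw [Real.sq_sqrt (by positivity)]
  rw [← h2, h1]

lemma repr_eq_zero_of_mem_span (v : OrthonormalBasis (Fin n) ℂ (EuclideanSpace ℂ (Fin n)))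
    (s : Finset (Fin n))
    {x : EuclideanSpace ℂ (Fin n)} (hx : x ∈ Submodule.span ℂ (⇑v '' ↑s)) {j : Fin n}
    (hj : j ∉ s) :
    v.repr x j = 0 := by
  induction hx using Submodule.span_induction with
  | mem y hy =>
    obtain ⟨i, hi, rfl⟩ := hy
    rw [v.repr_self]
    rw [EuclideanSpace.single_apply]
    have : ¬ j = i := fun h => hj (h ▸ hi)
    simp [this]
  | zero => simp
  | add y z _ _ hy hz => simp [hy, hz]
  | smul c y _ hy => simp [hy]

lemma quad_le_of_mem_span (v : OrthonormalBasis (Fin n) ℂ (EuclideanSpace ℂ (Fin n)))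
    (M : Matrix (Fin n) (Fin n) ℂ) (c : Fin n → ℝ)
    (h : ∀ j, M *ᵥ ⇑(v j) = (c j : ℂ) • ⇑(v j)) (s : Finset (Fin n)) (t : ℝ)
    (hc : ∀ j ∈ s, c j ≤ t) {x : EuclideanSpace ℂ (Fin n)}
    (hx : x ∈ Submodule.span ℂ (⇑v '' ↑s)) (hx1 : ‖x‖ = 1) :
    RCLike.re (inner ℂ x (toEuclideanLin M x) : ℂ) ≤ t := by
  rw [quadform_eq v M c h x]
  have hz : ∀ j ∉ s, c j * ‖v.repr x j‖ ^ 2 = 0 := fun j hj => by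
    rw [repr_eq_zero_of_mem_span v s hx hj]; simp
  rw [← Finset.sum_subset (Finset.subset_univ s) (fun j _ hj => hz j hj)]
  have hz2 : ∀ j ∉ s, ‖v.repr x j‖ ^ 2 = 0 := fun j hj => by
    rw [repr_eq_zero_of_mem_span v s hx hj]; simp
  calc ∑ j ∈ s, c j * ‖v.repr x j‖ ^ 2 ≤ ∑ j ∈ s, t * ‖v.repr x j‖ ^ 2 := by
        refine Finset.sum_le_sum fun j hj => ?_
        exact mul_le_mul_of_nonneg_right (hc j hj) (by positivity)
    _ = t * ∑ j ∈ s, ‖v.repr x j‖ ^ 2 := by rw [Finset.mul_sum]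
    _ = t := by
        rw [Finset.sum_subset (Finset.subset_univ s) (fun j _ hj => hz2 j hj),
          parseval, hx1]; simp

lemma quad_ge_of_mem_span (v : OrthonormalBasis (Fin n) ℂ (EuclideanSpace ℂ (Fin n)))
    (M : Matrix (Fin n) (Fin n) ℂ) (c : Fin n → ℝ)
    (h : ∀ j, M *ᵥ ⇑(v j) = (c j : ℂ) • ⇑(v j)) (s : Finset (Fin n)) (t : ℝ)
    (hc : ∀ j ∈ s, t ≤ c j) {x : EuclideanSpace ℂ (Fin n)}
    (hx : x ∈ Submodule.span ℂ (⇑v '' ↑s)) (hx1 : ‖x‖ = 1) :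
    t ≤ RCLike.re (inner ℂ x (toEuclideanLin M x) : ℂ) := by
  have := quad_le_of_mem_span v (-M) (-c) (fun j => by
    rw [neg_mulVec, h j]
    show _ = ((-c j : ℝ) : ℂ) • _
    push_cast
    rw [neg_smul]) s (-t)
    (fun j hj => by simpa using hc j hj) hx hx1
  rw [show toEuclideanLin (-M) x = -(toEuclideanLin M x) by rw [map_neg]; rfl,
    inner_neg_right, map_neg] at this
  linarith

lemma finrank_span_onb (v : OrthonormalBasis (Fin n) ℂ (EuclideanSpace ℂ (Fin n)))
    (s : Finset (Fin n)) :
    Module.finrank ℂ (Submodule.span ℂ (⇑v '' ↑s)) = s.card := by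
  have li : LinearIndependent ℂ (fun i : {x // x ∈ s} => v i) :=
    v.orthonormal.linearIndependent.comp _ Subtype.val_injective
  have himg : ⇑v '' ↑s = Set.range (fun i : {x // x ∈ s} => v i) := by
    ext y; simp
  rw [himg, finrank_span_eq_card li]
  simp

lemma exists_ne_zero_mem_inf (S T : Submodule ℂ (EuclideanSpace ℂ (Fin n)))
    (h : n < Module.finrank ℂ S + Module.finrank ℂ T) :
    ∃ x : EuclideanSpace ℂ (Fin n), x ∈ S ⊓ T ∧ x ≠ 0 := by
  have hE : Module.finrank ℂ (EuclideanSpace ℂ (Fin n)) = n := by simp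
  have h1 := Submodule.finrank_sup_add_finrank_inf_eq S T
  have h2 : Module.finrank ℂ ↥(S ⊔ T) ≤ Module.finrank ℂ (EuclideanSpace ℂ (Fin n)) :=
    Submodule.finrank_le _
  rw [hE] at h2
  have h3 : 0 < Module.finrank ℂ ↥(S ⊓ T) := by omega
  have h4 : S ⊓ T ≠ ⊥ := by
    intro hbot
    rw [hbot, finrank_bot] at h3
    exact lt_irrefl 0 h3
  exact Submodule.exists_mem_ne_zero_of_ne_bot h4

lemma eigValsDown_eq {M : Matrix (Fin n) (Fin n) ℂ} (hM : M.IsHermitian) (k : Fin n) :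
    eigValsDown M k = hM.eigenvalues (Tuple.sort hM.eigenvalues k.rev) := by
  rw [eigValsDown, dif_pos hM]; rfl

lemma eigen_mulVec {M : Matrix (Fin n) (Fin n) ℂ} (hM : M.IsHermitian) (j : Fin n) :
    M *ᵥ ⇑(hM.eigenvectorBasis j) = ((hM.eigenvalues j : ℝ) : ℂ) • ⇑(hM.eigenvectorBasis j) := by
  rw [hM.mulVec_eigenvectorBasis j, RCLike.real_smul_eq_coe_smul (K := ℂ)]
  rfl

/-- Courant-Fischer, upper bound half -/
lemma cf_upper {X : Matrix (Fin n) (Fin n) ℂ} (hX : X.IsHermitian) (k : Fin n) (t : ℝ)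
    (S : Submodule ℂ (EuclideanSpace ℂ (Fin n))) (hdim : n ≤ Module.finrank ℂ S + (k : ℕ))
    (hbound : ∀ x ∈ S, ‖x‖ = 1 → RCLike.re (inner ℂ x (toEuclideanLin X x) : ℂ) ≤ t) :
    eigValsDown X k ≤ t := by
  classical
  set σ := Tuple.sort hX.eigenvalues with hσ
  set sH : Finset (Fin n) := (Finset.Ici k.rev).image σ with hsH
  have hcard : sH.card = (k : ℕ) + 1 := by
    rw [hsH, Finset.card_image_of_injective _ σ.injective, Fin.card_Ici, Fin.val_rev]
    omega
  set T := Submodule.span ℂ (⇑(hX.eigenvectorBasis) '' ↑sH) with hT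
  have hTdim : Module.finrank ℂ T = (k : ℕ) + 1 := by rw [hT, finrank_span_onb, hcard]
  obtain ⟨y, hy, hy0⟩ := exists_ne_zero_mem_inf S T (by omega)
  set u : EuclideanSpace ℂ (Fin n) := (‖y‖⁻¹ : ℝ) • y with hu
  have hu1 : ‖u‖ = 1 := by
    rw [hu, norm_smul, norm_inv, norm_norm, inv_mul_cancel₀ (norm_ne_zero_iff.mpr hy0)]
  have huS : u ∈ S := S.smul_of_tower_mem _ hy.1
  have huT : u ∈ T := T.smul_of_tower_mem _ hy.2
  have hlow : eigValsDown X k ≤ RCLike.re (inner ℂ u (toEuclideanLin X u) : ℂ) := by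
    refine quad_ge_of_mem_span _ X hX.eigenvalues (eigen_mulVec hX) sH _
      (fun j hj => ?_) huT hu1
    rw [eigValsDown_eq hX k]
    obtain ⟨i, hi, rfl⟩ := Finset.mem_image.mp hj
    exact Tuple.monotone_sort hX.eigenvalues (Finset.mem_Ici.mp hi)
  exact le_trans hlow (hbound u huS hu1)

/-- Courant-Fischer, lower bound half -/
lemma cf_lower {X : Matrix (Fin n) (Fin n) ℂ} (hX : X.IsHermitian) (k : Fin n) (t : ℝ)
    (S : Submodule ℂ (EuclideanSpace ℂ (Fin n))) (hdim : (k : ℕ) < Module.finrank ℂ S)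
    (hbound : ∀ x ∈ S, ‖x‖ = 1 → t ≤ RCLike.re (inner ℂ x (toEuclideanLin X x) : ℂ)) :
    t ≤ eigValsDown X k := by
  classical
  set σ := Tuple.sort hX.eigenvalues with hσ
  set sL : Finset (Fin n) := (Finset.Iic k.rev).image σ with hsL
  have hcard : sL.card = n - (k : ℕ) := by
    rw [hsL, Finset.card_image_of_injective _ σ.injective, Fin.card_Iic, Fin.val_rev]
    omega
  set T := Submodule.span ℂ (⇑(hX.eigenvectorBasis) '' ↑sL) with hT
  have hTdim : Module.finrank ℂ T = n - (k : ℕ) := by rw [hT, finrank_span_onb, hcard]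
  have hkn : (k : ℕ) < n := k.isLt
  obtain ⟨y, hy, hy0⟩ := exists_ne_zero_mem_inf S T (by omega)
  set u : EuclideanSpace ℂ (Fin n) := (‖y‖⁻¹ : ℝ) • y with hu
  have hu1 : ‖u‖ = 1 := by
    rw [hu, norm_smul, norm_inv, norm_norm, inv_mul_cancel₀ (norm_ne_zero_iff.mpr hy0)]
  have huS : u ∈ S := S.smul_of_tower_mem _ hy.1
  have huT : u ∈ T := T.smul_of_tower_mem _ hy.2
  have hhigh : RCLike.re (inner ℂ u (toEuclideanLin X u) : ℂ) ≤ eigValsDown X k := by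
    refine quad_le_of_mem_span _ X hX.eigenvalues (eigen_mulVec hX) sL _
      (fun j hj => ?_) huT hu1
    rw [eigValsDown_eq hX k]
    obtain ⟨i, hi, rfl⟩ := Finset.mem_image.mp hj
    exact Tuple.monotone_sort hX.eigenvalues (Finset.mem_Iic.mp hi)
  exact le_trans (hbound u huS hu1) hhigh

end Stmt0Aux
namespace Stmt0Aux
variable {n : ℕ}

lemma matFun_isHermitian {M : Matrix (Fin n) (Fin n) ℂ} (hM : M.IsHermitian) (g : ℝ → ℝ) :
    (matFun g M).IsHermitian := by
  rw [matFun, dif_pos hM]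
  have hd : (Matrix.diagonal (fun i => ((g (hM.eigenvalues i) : ℝ) : ℂ))).IsHermitian := by
    have hv : (star (fun i => ((g (hM.eigenvalues i) : ℝ) : ℂ)))
        = (fun i => ((g (hM.eigenvalues i) : ℝ) : ℂ)) := by
      funext i
      simpa using Complex.conj_ofReal (g (hM.eigenvalues i))
    rw [Matrix.IsHermitian, diagonal_conjTranspose, hv]
  have h2 := Matrix.isHermitian_mul_mul_conjTranspose
    (hM.eigenvectorUnitary : Matrix (Fin n) (Fin n) ℂ) hd
  simpa [Matrix.star_eq_conjTranspose] using h2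

lemma matFun_mulVec {M : Matrix (Fin n) (Fin n) ℂ} (hM : M.IsHermitian) (g : ℝ → ℝ) (j : Fin n) :
    (matFun g M) *ᵥ ⇑(hM.eigenvectorBasis j)
      = ((g (hM.eigenvalues j) : ℝ) : ℂ) • ⇑(hM.eigenvectorBasis j) := by
  rw [matFun, dif_pos hM, ← Matrix.mulVec_mulVec, ← Matrix.mulVec_mulVec,
    hM.star_eigenvectorUnitary_mulVec, Matrix.diagonal_mulVec_single, mul_one]
  funext i
  simp [Matrix.mulVec_single, mul_comm]

lemma quad_eq_dot (M : Matrix (Fin n) (Fin n) ℂ) (x : EuclideanSpace ℂ (Fin n)) :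
    (inner ℂ x (toEuclideanLin M x) : ℂ) = dotProduct (star ⇑x) (M *ᵥ ⇑x) := by
  rw [EuclideanSpace.inner_eq_star_dotProduct, dotProduct_comm]
  rfl

lemma quad_sub (M N : Matrix (Fin n) (Fin n) ℂ) (x : EuclideanSpace ℂ (Fin n)) :
    RCLike.re (inner ℂ x (toEuclideanLin (M - N) x) : ℂ)
      = RCLike.re (inner ℂ x (toEuclideanLin M x) : ℂ)
        - RCLike.re (inner ℂ x (toEuclideanLin N x) : ℂ) := by
  rw [quad_eq_dot, quad_eq_dot, quad_eq_dot, Matrix.sub_mulVec, dotProduct_sub, map_sub]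

lemma psd_quad_nonneg {M : Matrix (Fin n) (Fin n) ℂ} (hM : M.PosSemidef)
    (x : EuclideanSpace ℂ (Fin n)) :
    0 ≤ RCLike.re (inner ℂ x (toEuclideanLin M x) : ℂ) := by
  rw [quad_eq_dot]
  have h := hM.dotProduct_mulVec_nonneg ⇑x
  rw [Complex.le_def] at h
  simpa using h.1

lemma quad_ge_of_shift {A : Matrix (Fin n) (Fin n) ℂ} {r : ℝ}
    (h : (A - r • (1 : Matrix (Fin n) (Fin n) ℂ)).PosSemidef) (x : EuclideanSpace ℂ (Fin n))
    (hx1 : ‖x‖ = 1) :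
    r ≤ RCLike.re (inner ℂ x (toEuclideanLin A x) : ℂ) := by
  have h0 := psd_quad_nonneg h x
  rw [quad_eq_dot, Matrix.sub_mulVec, dotProduct_sub, map_sub] at h0
  have e1 : (r • (1 : Matrix (Fin n) (Fin n) ℂ)) *ᵥ ⇑x = r • ⇑x := by
    rw [Matrix.smul_mulVec, Matrix.one_mulVec]
  have e2 : dotProduct (star ⇑x) (r • ⇑x) = r • dotProduct (star ⇑x) ⇑x := by
    rw [dotProduct_smul]
  have e3 : dotProduct (star ⇑x) ⇑x = (inner ℂ x x : ℂ) := by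
    rw [EuclideanSpace.inner_eq_star_dotProduct, dotProduct_comm]
  have e4 : (inner ℂ x x : ℂ) = ((‖x‖ : ℝ) : ℂ) ^ 2 := inner_self_eq_norm_sq_to_K x
  rw [e1, e2, e3, e4, hx1] at h0
  rw [quad_eq_dot]
  norm_num [RCLike.smul_re] at h0
  exact h0

lemma quad_le_opNorm (B : Matrix (Fin n) (Fin n) ℂ) (x : EuclideanSpace ℂ (Fin n))
    (hx1 : ‖x‖ = 1) :
    RCLike.re (inner ℂ x (toEuclideanLin B x) : ℂ) ≤ opNorm B := by
  have h3 : toEuclideanLin B x = Matrix.toEuclideanCLM (𝕜 := ℂ) B x := by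
    rw [← Matrix.coe_toEuclideanCLM_eq_toEuclideanLin]
    rfl
  calc RCLike.re (inner ℂ x (toEuclideanLin B x) : ℂ)
      ≤ ‖(inner ℂ x (toEuclideanLin B x) : ℂ)‖ := RCLike.re_le_norm _
    _ ≤ ‖x‖ * ‖toEuclideanLin B x‖ := norm_inner_le_norm _ _
    _ = ‖Matrix.toEuclideanCLM (𝕜 := ℂ) B x‖ := by rw [hx1, one_mul, h3]
    _ ≤ opNorm B := by
        have h4 := (Matrix.toEuclideanCLM (𝕜 := ℂ) B).le_opNorm x
        rw [hx1, mul_one] at h4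
        exact h4

lemma eig_eq_quad {M : Matrix (Fin n) (Fin n) ℂ} (hM : M.IsHermitian) (i : Fin n) :
    hM.eigenvalues i
      = RCLike.re (inner ℂ (hM.eigenvectorBasis i)
          (toEuclideanLin M (hM.eigenvectorBasis i)) : ℂ) := by
  rw [quad_eq_dot]
  exact hM.eigenvalues_eq i

end Stmt0Aux

open Stmt0Aux

/-- Proposition `prop:ggc`: for PSD `A, B` with `A ≥ ‖B‖·I` and a
non-negative, monotonically increasing, concave `g` on `[0,∞)`, each sorted eigenvalue of
`g(A) - g(B)` is at most the corresponding sorted eigenvalue of `g(A - B)`. -/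
theorem stmt0 {n : ℕ} (A B : Matrix (Fin n) (Fin n) ℂ)
    (hA : A.PosSemidef) (hB : B.PosSemidef)
    (hAB : (A - opNorm B • (1 : Matrix (Fin n) (Fin n) ℂ)).PosSemidef)
    (g : ℝ → ℝ) (hg_nonneg : ∀ x ∈ Set.Ici (0 : ℝ), 0 ≤ g x)
    (hg_mono : MonotoneOn g (Set.Ici (0 : ℝ)))
    (hg_conc : ConcaveOn ℝ (Set.Ici (0 : ℝ)) g)
    (k : Fin n) :
    eigValsDown (matFun g A - matFun g B) k ≤ eigValsDown (matFun g (A - B)) k := by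
  classical
  set b := opNorm B with hbdef
  have hb0 : (0:ℝ) ≤ b := norm_nonneg _
  have hAh : A.IsHermitian := hA.1
  have hBh : B.IsHermitian := hB.1
  have hCh : (A - B).IsHermitian := hAh.sub hBh
  have hgA : (matFun g A).IsHermitian := matFun_isHermitian hAh g
  have hgB : (matFun g B).IsHermitian := matFun_isHermitian hBh g
  have hXh : (matFun g A - matFun g B).IsHermitian := hgA.sub hgB
  have hYh : (matFun g (A - B)).IsHermitian := matFun_isHermitian hCh g
  -- quadratic form facts
  have qA_ge : ∀ x : EuclideanSpace ℂ (Fin n), ‖x‖ = 1 →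
      b ≤ RCLike.re (inner ℂ x (toEuclideanLin A x) : ℂ) := fun x hx => quad_ge_of_shift hAB x hx
  have qB_le : ∀ x : EuclideanSpace ℂ (Fin n), ‖x‖ = 1 →
      RCLike.re (inner ℂ x (toEuclideanLin B x) : ℂ) ≤ b := fun x hx => quad_le_opNorm B x hx
  have qB_ge : ∀ x : EuclideanSpace ℂ (Fin n),
      0 ≤ RCLike.re (inner ℂ x (toEuclideanLin B x) : ℂ) := fun x => psd_quad_nonneg hB x
  -- eigenvalue facts
  have hα : ∀ i, b ≤ hAh.eigenvalues i := fun i => by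
    rw [eig_eq_quad hAh i]
    exact qA_ge _ (hAh.eigenvectorBasis.orthonormal.1 i)
  have hβ0 : ∀ i, 0 ≤ hBh.eigenvalues i := fun i => by
    rw [eig_eq_quad hBh i]; exact qB_ge _
  have hβb : ∀ i, hBh.eigenvalues i ≤ b := fun i => by
    rw [eig_eq_quad hBh i]
    exact qB_le _ (hBh.eigenvectorBasis.orthonormal.1 i)
  have hγ0 : ∀ i, 0 ≤ hCh.eigenvalues i := fun i => by
    rw [eig_eq_quad hCh i, quad_sub]
    have h1 := qA_ge _ (hCh.eigenvectorBasis.orthonormal.1 i)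
    have h2 := qB_le _ (hCh.eigenvectorBasis.orthonormal.1 i)
    linarith
  -- the key pointwise bound
  have key : ∀ x : EuclideanSpace ℂ (Fin n), ‖x‖ = 1 →
      RCLike.re (inner ℂ x (toEuclideanLin (matFun g A - matFun g B) x) : ℂ)
        ≤ g (RCLike.re (inner ℂ x (toEuclideanLin (A - B) x) : ℂ))
      ∧ 0 ≤ RCLike.re (inner ℂ x (toEuclideanLin (A - B) x) : ℂ) := by
    intro x hx1
    set p : Fin n → ℝ := fun i => ‖(hAh.eigenvectorBasis).repr x i‖ ^ 2 with hp
    set q : Fin n → ℝ := fun i => ‖(hBh.eigenvectorBasis).repr x i‖ ^ 2 with hq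
    have hp0 : ∀ i, 0 ≤ p i := fun i => by positivity
    have hq0 : ∀ i, 0 ≤ q i := fun i => by positivity
    have hpsum : ∑ i, p i = 1 := by rw [hp]; rw [parseval, hx1, one_pow]
    have hqsum : ∑ i, q i = 1 := by rw [hq]; rw [parseval, hx1, one_pow]
    have eA : RCLike.re (inner ℂ x (toEuclideanLin A x) : ℂ) = ∑ i, hAh.eigenvalues i * p i :=
      quadform_eq _ A _ (eigen_mulVec hAh) x
    have eB : RCLike.re (inner ℂ x (toEuclideanLin B x) : ℂ) = ∑ i, hBh.eigenvalues i * q i :=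
      quadform_eq _ B _ (eigen_mulVec hBh) x
    have egA : RCLike.re (inner ℂ x (toEuclideanLin (matFun g A) x) : ℂ)
        = ∑ i, g (hAh.eigenvalues i) * p i :=
      quadform_eq _ (matFun g A) _ (matFun_mulVec hAh g) x
    have egB : RCLike.re (inner ℂ x (toEuclideanLin (matFun g B) x) : ℂ)
        = ∑ i, g (hBh.eigenvalues i) * q i :=
      quadform_eq _ (matFun g B) _ (matFun_mulVec hBh g) x
    set a := ∑ i, hAh.eigenvalues i * p i with ha
    set βs := ∑ i, hBh.eigenvalues i * q i with hβs
    have hab : b ≤ a := by rw [← eA]; exact qA_ge x hx1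
    have hβsb : βs ≤ b := by
      calc ∑ i, hBh.eigenvalues i * q i ≤ ∑ i, b * q i :=
            Finset.sum_le_sum fun i _ => mul_le_mul_of_nonneg_right (hβb i) (hq0 i)
        _ = b := by rw [← Finset.mul_sum, hqsum, mul_one]
    have hβs0 : 0 ≤ βs :=
      Finset.sum_nonneg fun i _ => mul_nonneg (hβ0 i) (hq0 i)
    -- Jensen on A side
    have j1 : ∑ i, p i • g (hAh.eigenvalues i) ≤ g (∑ i, p i • hAh.eigenvalues i) :=
      hg_conc.le_map_sum (fun i _ => hp0 i) hpsum
        (fun i _ => Set.mem_Ici.mpr (le_trans hb0 (hα i)))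
    have j1' : ∑ i, g (hAh.eigenvalues i) * p i ≤ g a := by
      have e1 : ∑ i, p i • hAh.eigenvalues i = a := by
        rw [ha]; exact Finset.sum_congr rfl fun i _ => by rw [smul_eq_mul, mul_comm]
      have e2 : ∑ i, p i • g (hAh.eigenvalues i) = ∑ i, g (hAh.eigenvalues i) * p i :=
        Finset.sum_congr rfl fun i _ => by rw [smul_eq_mul, mul_comm]
      rw [← e2, ← e1]; exact j1
    -- Jensen on B side (at points b - β i)
    have j2 : ∑ i, q i • g (b - hBh.eigenvalues i) ≤ g (∑ i, q i • (b - hBh.eigenvalues i)) :=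
      hg_conc.le_map_sum (fun i _ => hq0 i) hqsum
        (fun i _ => Set.mem_Ici.mpr (by linarith [hβb i]))
    have e3 : ∑ i, q i • (b - hBh.eigenvalues i) = b - βs := by
      simp only [smul_eq_mul, mul_sub]
      rw [Finset.sum_sub_distrib]
      congr 1
      · rw [← Finset.sum_mul, hqsum, one_mul]
      · exact Finset.sum_congr rfl fun i _ => by rw [mul_comm]
    -- pointwise bound : g b - g (b - β i) ≤ g (β i)
    have per : ∀ i, g b - g (b - hBh.eigenvalues i) ≤ g (hBh.eigenvalues i) := fun i => by
      have h4 := concave_four hg_conc (hβ0 i) (le_refl (hBh.eigenvalues i)) (hβb i)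
      rw [sub_self] at h4
      have h5 : (0:ℝ) ≤ g 0 := hg_nonneg 0 (Set.mem_Ici.mpr (le_refl 0))
      linarith
    have egB_ge : g b - g (b - βs) ≤ ∑ i, g (hBh.eigenvalues i) * q i := by
      have s1 : ∑ i, q i • g (b - hBh.eigenvalues i) ≤ g (b - βs) := by rw [← e3]; exact j2
      have s2 : ∑ i, q i * (g b - g (b - hBh.eigenvalues i)) ≤ ∑ i, g (hBh.eigenvalues i) * q i :=
        Finset.sum_le_sum fun i _ => by
          rw [mul_comm (g (hBh.eigenvalues i)) (q i)]
          exact mul_le_mul_of_nonneg_left (per i) (hq0 i)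
      have s3 : ∑ i, q i * (g b - g (b - hBh.eigenvalues i))
          = g b - ∑ i, q i • g (b - hBh.eigenvalues i) := by
        simp only [mul_sub, smul_eq_mul]
        rw [Finset.sum_sub_distrib, ← Finset.sum_mul, hqsum, one_mul]
      linarith
    have four := concave_four hg_conc hβs0 hβsb hab
    have eX : RCLike.re (inner ℂ x (toEuclideanLin (matFun g A - matFun g B) x) : ℂ)
        = (∑ i, g (hAh.eigenvalues i) * p i) - (∑ i, g (hBh.eigenvalues i) * q i) := by
      rw [quad_sub, egA, egB]
    have eC : RCLike.re (inner ℂ x (toEuclideanLin (A - B) x) : ℂ) = a - βs := by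
      rw [quad_sub, eA, eB]
    rw [eX, eC]
    constructor
    · linarith
    · linarith
  -- sorted eigenvalue of A - B at k
  set σC := Tuple.sort hCh.eigenvalues with hσC
  set γk := eigValsDown (A - B) k with hγk
  have hγk0 : 0 ≤ γk := by rw [hγk, eigValsDown_eq hCh]; exact hγ0 _
  set sL : Finset (Fin n) := (Finset.Iic k.rev).image σC with hsL
  set sH : Finset (Fin n) := (Finset.Ici k.rev).image σC with hsH
  have hkn : (k : ℕ) < n := k.isLt
  have hcardL : sL.card = n - (k : ℕ) := by
    rw [hsL, Finset.card_image_of_injective _ σC.injective, Fin.card_Iic, Fin.val_rev]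
    omega
  have hcardH : sH.card = (k : ℕ) + 1 := by
    rw [hsH, Finset.card_image_of_injective _ σC.injective, Fin.card_Ici, Fin.val_rev]
    omega
  -- Step 1 : eigValsDown X k ≤ g γk
  have step1 : eigValsDown (matFun g A - matFun g B) k ≤ g γk := by
    refine cf_upper hXh k (g γk) (Submodule.span ℂ (⇑(hCh.eigenvectorBasis) '' ↑sL)) ?_ ?_
    · rw [finrank_span_onb, hcardL]; omega
    · intro x hx hx1
      have hqC : RCLike.re (inner ℂ x (toEuclideanLin (A - B) x) : ℂ) ≤ γk := by
        refine quad_le_of_mem_span _ (A - B) hCh.eigenvalues (eigen_mulVec hCh) sL γk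
          (fun j hj => ?_) hx hx1
        rw [hγk, eigValsDown_eq hCh k]
        obtain ⟨i, hi, rfl⟩ := Finset.mem_image.mp hj
        exact Tuple.monotone_sort hCh.eigenvalues (Finset.mem_Iic.mp hi)
      obtain ⟨k1, k2⟩ := key x hx1
      exact le_trans k1 (hg_mono (Set.mem_Ici.mpr k2) (Set.mem_Ici.mpr hγk0) hqC)
  -- Step 2 : g γk ≤ eigValsDown Y k
  have step2 : g γk ≤ eigValsDown (matFun g (A - B)) k := by
    refine cf_lower hYh k (g γk) (Submodule.span ℂ (⇑(hCh.eigenvectorBasis) '' ↑sH)) ?_ ?_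
    · rw [finrank_span_onb, hcardH]; omega
    · intro x hx hx1
      refine quad_ge_of_mem_span _ (matFun g (A - B)) (fun i => g (hCh.eigenvalues i))
        (matFun_mulVec hCh g) sH (g γk) (fun j hj => ?_) hx hx1
      rw [hγk, eigValsDown_eq hCh k]
      obtain ⟨i, hi, rfl⟩ := Finset.mem_image.mp hj
      have hle : hCh.eigenvalues (σC k.rev) ≤ hCh.eigenvalues (σC i) :=
        Tuple.monotone_sort hCh.eigenvalues (Finset.mem_Ici.mp hi)
      exact hg_mono (Set.mem_Ici.mpr (hγ0 _)) (Set.mem_Ici.mpr (hγ0 _)) hle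
  exact le_trans step1 step2
end

section
/- Let g(x) = x + max(x − 1, 0), and let A and B be the 2×2 real positive semidefinite matrices A = [[9/10, 0], [0, 6/10]] and B = [[8/10, 1/2], [1/2, 4/10]]. Then the operator norm of g(A) − g(B) is strictly smaller than the operator norm of g(|A − B|), where |M| = (M*M)^{1/2}. In particular, the inequality ‖g(A) − g(B)‖ ≥ ‖g(|A − B|)‖ fails for this non-negative convex function g with g(0) = 0. -/
open Matrix
open scoped ComplexOrder

-- helper lemmas (tested)
lemma matFun_eq_affine {n : ℕ} {A : Matrix (Fin n) (Fin n) ℝ} (hA : A.IsHermitian)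
    {g : ℝ → ℝ} {a b : ℝ} (h : ∀ i, g (hA.eigenvalues i) = a * hA.eigenvalues i + b) :
    matFun g A = a • A + b • 1 := by
  have hU : (hA.eigenvectorUnitary : Matrix (Fin n) (Fin n) ℝ) *
      star (hA.eigenvectorUnitary : Matrix (Fin n) (Fin n) ℝ) = 1 :=
    (Matrix.mem_unitaryGroup_iff).mp (hA.eigenvectorUnitary).2
  rw [matFun, dif_pos hA]
  simp only [RCLike.ofReal_real_eq_id, id_eq]
  have hd : Matrix.diagonal (fun i => g (hA.eigenvalues i))
      = a • Matrix.diagonal (RCLike.ofReal ∘ hA.eigenvalues) + b • (1 : Matrix (Fin n) (Fin n) ℝ) := by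
    ext i j
    rcases eq_or_ne i j with hij | hij
    · subst hij
      simp [Matrix.add_apply, Matrix.smul_apply, Matrix.diagonal_apply_eq, Matrix.one_apply_eq,
        h i]
    · simp [Matrix.add_apply, Matrix.smul_apply, Matrix.diagonal_apply_ne _ hij,
        Matrix.one_apply_ne hij]
  rw [hd, Matrix.mul_add, Matrix.add_mul, Matrix.mul_smul, Matrix.smul_mul,
    Matrix.mul_smul, Matrix.smul_mul, ← Unitary.conjStarAlgAut_apply (S := ℝ), ← hA.spectral_theorem, mul_one, hU]

lemma eig_det_zero {n : ℕ} {A : Matrix (Fin n) (Fin n) ℝ} (hA : A.IsHermitian) (i : Fin n) :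
    (hA.eigenvalues i • (1 : Matrix (Fin n) (Fin n) ℝ) - A).det = 0 := by
  have h := hA.eigenvalues_mem_spectrum_real i
  rw [spectrum.mem_iff] at h
  by_contra hd
  exact h ((Matrix.isUnit_iff_isUnit_det _).mpr (isUnit_iff_ne_zero.mpr (by
    simpa [Matrix.algebraMap_eq_diagonal, Matrix.smul_one_eq_diagonal, Pi.algebraMap_def] using hd)))

lemma eig_quadratic {A : Matrix (Fin 2) (Fin 2) ℝ} (hA : A.IsHermitian) (i : Fin 2) :
    (hA.eigenvalues i - A 0 0) * (hA.eigenvalues i - A 1 1) - A 0 1 * A 1 0 = 0 := by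
  have h := eig_det_zero hA i
  rw [Matrix.det_fin_two] at h
  simp only [Matrix.sub_apply, Matrix.smul_apply, Matrix.one_apply_eq, smul_eq_mul,
    Matrix.one_apply_ne (by decide : (0 : Fin 2) ≠ 1),
    Matrix.one_apply_ne (by decide : (1 : Fin 2) ≠ 0), mul_one, mul_zero] at h
  linear_combination h

section main
noncomputable def eSq : ℝ := Real.sqrt (101/100)
noncomputable def Smat : Matrix (Fin 2) (Fin 2) ℝ :=
  eSq⁻¹ • !![49/100, -(3/20); -(3/20), 13/25]

lemma he2 : eSq ^ 2 = 101/100 := Real.sq_sqrt (by norm_num)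
lemma he0 : 0 < eSq := Real.sqrt_pos.mpr (by norm_num)

lemma hermA : (!![(9:ℝ)/10, 0; 0, 6/10]).IsHermitian := by
  ext i j; fin_cases i <;> fin_cases j <;> simp [Matrix.conjTranspose_apply]

lemma hermB : (!![(8:ℝ)/10, 1/2; 1/2, 4/10]).IsHermitian := by
  ext i j; fin_cases i <;> fin_cases j <;> simp [Matrix.conjTranspose_apply]

lemma hermS : Smat.IsHermitian := by
  ext i j
  fin_cases i <;> fin_cases j <;>
    simp [Smat, Matrix.conjTranspose_apply, Matrix.smul_apply]

lemma psdS : Smat.PosSemidef := by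
  refine Matrix.PosSemidef.of_dotProduct_mulVec_nonneg hermS (fun x => ?_)
  have h9 : (0:ℝ) ≤ eSq⁻¹ := inv_nonneg.mpr he0.le
  simp only [Smat, Matrix.smul_mulVec, dotProduct, Matrix.mulVec,
    Fin.sum_univ_two, Pi.smul_apply, smul_eq_mul, Pi.star_apply, star_trivial]
  have hq : (0:ℝ) ≤ x 0 * ((49/100) * x 0 + (-(3/20)) * x 1)
      + x 1 * ((-(3/20)) * x 0 + (13/25) * x 1) := by
    nlinarith [sq_nonneg (x 0 - x 1), sq_nonneg (x 0), sq_nonneg (x 1)]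
  calc (0:ℝ) ≤ eSq⁻¹ * (x 0 * ((49/100) * x 0 + (-(3/20)) * x 1)
      + x 1 * ((-(3/20)) * x 0 + (13/25) * x 1)) := mul_nonneg h9 hq
    _ = _ := by
        simp [dotProduct, Matrix.mulVec, Fin.sum_univ_two]
        ring

open scoped MatrixOrder in
lemma habs : matAbs (!![(9:ℝ)/10, 0; 0, 6/10] - !![(8:ℝ)/10, 1/2; 1/2, 4/10]) = Smat := by
  have hsq : Smat ^ 2 =
      (!![(9:ℝ)/10, 0; 0, 6/10] - !![(8:ℝ)/10, 1/2; 1/2, 4/10])ᴴ *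
      (!![(9:ℝ)/10, 0; 0, 6/10] - !![(8:ℝ)/10, 1/2; 1/2, 4/10]) := by
    have hinv2 : (eSq⁻¹)^2 = 100/101 := by
      rw [← one_div, div_pow, one_pow, he2]; norm_num
    rw [pow_two, Smat, Matrix.smul_mul, Matrix.mul_smul, smul_smul, ← pow_two, hinv2]
    ext i j
    fin_cases i <;> fin_cases j <;>
      simp [Matrix.mul_apply, Fin.sum_univ_two, Matrix.smul_apply, Matrix.sub_apply,
        Matrix.conjTranspose_apply, Matrix.transpose_apply, Matrix.vecHead, Matrix.vecTail] <;>
      norm_num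
  have hX := Matrix.posSemidef_conjTranspose_mul_self
    (!![(9:ℝ)/10, 0; 0, 6/10] - !![(8:ℝ)/10, 1/2; 1/2, 4/10])
  have h1 : matAbs (!![(9:ℝ)/10, 0; 0, 6/10] - !![(8:ℝ)/10, 1/2; 1/2, 4/10]) =
      cfc Real.sqrt ((!![(9:ℝ)/10, 0; 0, 6/10] - !![(8:ℝ)/10, 1/2; 1/2, 4/10])ᴴ *
        (!![(9:ℝ)/10, 0; 0, 6/10] - !![(8:ℝ)/10, 1/2; 1/2, 4/10])) := by
    rw [hX.1.cfc_eq, Matrix.IsHermitian.cfc, Unitary.conjStarAlgAut_apply]; rfl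
  have hmul : Smat * Smat = (!![(9:ℝ)/10, 0; 0, 6/10] - !![(8:ℝ)/10, 1/2; 1/2, 4/10])ᴴ *
      (!![(9:ℝ)/10, 0; 0, 6/10] - !![(8:ℝ)/10, 1/2; 1/2, 4/10]) := by
    rw [← pow_two, hsq]
  have h2 := CFC.sqrt_unique hmul psdS.nonneg
  rw [CFC.sqrt_eq_real_sqrt _ hX.nonneg, cfcₙ_eq_cfc (hf0 := by simp)] at h2
  rw [h1, h2]

end main

section eigs
noncomputable def dd : ℝ := Real.sqrt (29/25)
noncomputable def aa : ℝ := 3/2 - (2/5)/dd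
noncomputable def bb : ℝ := (3/5 - dd/2)*(1-aa)

lemma hd2 : dd ^ 2 = 29/25 := Real.sq_sqrt (by norm_num)
lemma hd0 : 0 < dd := Real.sqrt_pos.mpr (by norm_num)

lemma gA_eq : matFun (fun x => x + max (x - 1) 0) !![(9:ℝ)/10, 0; 0, 6/10]
    = (1:ℝ) • !![(9:ℝ)/10, 0; 0, 6/10] + (0:ℝ) • 1 := by
  apply matFun_eq_affine hermA
  intro i
  have h := eig_quadratic hermA i
  set μ := hermA.eigenvalues i with hμ
  norm_num at h
  have hle : μ ≤ 1 := by
    rcases h with h1 | h1 <;> nlinarith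
  simp only [max_eq_right (by linarith : μ - 1 ≤ 0)]
  ring

lemma gS_eq : matFun (fun x => x + max (x - 1) 0) Smat = (1:ℝ) • Smat + (0:ℝ) • 1 := by
  apply matFun_eq_affine hermS
  intro i
  have h := eig_quadratic hermS i
  set μ := hermS.eigenvalues i with hμ
  have hS00 : Smat 0 0 = eSq⁻¹ * (49/100) := by simp [Smat, Matrix.smul_apply]
  have hS01 : Smat 0 1 = eSq⁻¹ * (-(3/20)) := by simp [Smat, Matrix.smul_apply]
  have hS10 : Smat 1 0 = eSq⁻¹ * (-(3/20)) := by simp [Smat, Matrix.smul_apply]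
  have hS11 : Smat 1 1 = eSq⁻¹ * (13/25) := by simp [Smat, Matrix.smul_apply]
  rw [hS00, hS01, hS10, hS11] at h
  have hne : eSq ≠ 0 := ne_of_gt he0
  have hinv : eSq⁻¹ = (100/101) * eSq := by
    field_simp
    linear_combination (-100:ℝ) * he2
  rw [hinv] at h
  have hq : μ^2 - eSq * μ + 23/100 = 0 := by
    linear_combination h - (2323/10201) * he2
  have heb1 : 1 ≤ eSq := by nlinarith [he2, he0]
  have heb2 : eSq ≤ 1.005 := by nlinarith [he2, he0]
  have hge : 0 ≤ μ := by nlinarith [hq, sq_nonneg μ]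
  have hle : μ ≤ 1 := by nlinarith [hq]
  simp only [max_eq_right (by linarith : μ - 1 ≤ 0)]
  ring

lemma gB_eq : matFun (fun x => x + max (x - 1) 0) !![(8:ℝ)/10, 1/2; 1/2, 4/10]
    = aa • !![(8:ℝ)/10, 1/2; 1/2, 4/10] + bb • 1 := by
  apply matFun_eq_affine hermB
  intro i
  have h := eig_quadratic hermB i
  set μ := hermB.eigenvalues i with hμ
  norm_num at h
  have h' : (μ - (6/5 + dd)/2) * (μ - (6/5 - dd)/2) = 0 := by
    linear_combination h - (1/4) * hd2
  have hdlb : 1 < dd := by nlinarith [hd2, hd0]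
  have hdub : dd < 6/5 := by nlinarith [hd2, hd0]
  rcases mul_eq_zero.mp h' with h1 | h1
  · have hμ1 : μ = (6/5 + dd)/2 := by linarith [sub_eq_zero.mp h1]
    rw [max_eq_left (by rw [hμ1]; linarith : (0:ℝ) ≤ μ - 1)]
    rw [hμ1]
    simp only [aa, bb]
    have hdne : dd ≠ 0 := ne_of_gt hd0
    field_simp
    ring
  · have hμ1 : μ = (6/5 - dd)/2 := by linarith [sub_eq_zero.mp h1]
    rw [max_eq_right (by rw [hμ1]; linarith : μ - 1 ≤ 0)]
    rw [hμ1]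
    simp only [aa, bb]
    have hdne : dd ≠ 0 := ne_of_gt hd0
    field_simp
    ring
end eigs

-- norm helpers
lemma mulVec_apply_fin2 (M : Matrix (Fin 2) (Fin 2) ℝ) (v : Fin 2 → ℝ) :
    M *ᵥ v = ![M 0 0 * v 0 + M 0 1 * v 1, M 1 0 * v 0 + M 1 1 * v 1] := by
  funext i
  fin_cases i <;> simp [Matrix.mulVec, dotProduct, Fin.sum_univ_two]

lemma euclid_norm_clm_apply (M : Matrix (Fin 2) (Fin 2) ℝ) (x : EuclideanSpace ℝ (Fin 2)) :
    ‖Matrix.toEuclideanCLM (𝕜 := ℝ) M x‖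
      = Real.sqrt ((M 0 0 * x 0 + M 0 1 * x 1)^2 + (M 1 0 * x 0 + M 1 1 * x 1)^2) := by
  rw [EuclideanSpace.norm_eq]
  congr 1
  rw [Fin.sum_univ_two]
  have h0 : (Matrix.toEuclideanCLM (𝕜 := ℝ) M x) 0 = M 0 0 * x 0 + M 0 1 * x 1 := by
    show (M *ᵥ (WithLp.equiv 2 _ x)) 0 = _
    rw [mulVec_apply_fin2]; rfl
  have h1 : (Matrix.toEuclideanCLM (𝕜 := ℝ) M x) 1 = M 1 0 * x 0 + M 1 1 * x 1 := by
    show (M *ᵥ (WithLp.equiv 2 _ x)) 1 = _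
    rw [mulVec_apply_fin2]; rfl
  rw [h0, h1]
  simp [sq_abs]

lemma euclid_norm_self (x : EuclideanSpace ℝ (Fin 2)) :
    ‖x‖ = Real.sqrt ((x 0)^2 + (x 1)^2) := by
  rw [EuclideanSpace.norm_eq, Fin.sum_univ_two]
  simp [sq_abs]

lemma opNorm_le_of (M : Matrix (Fin 2) (Fin 2) ℝ) (c : ℝ) (hc : 0 ≤ c)
    (h : ∀ x y : ℝ, (M 0 0 * x + M 0 1 * y)^2 + (M 1 0 * x + M 1 1 * y)^2 ≤ c^2 * (x^2 + y^2)) :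
    opNorm M ≤ c := by
  apply ContinuousLinearMap.opNorm_le_bound _ hc
  intro x
  rw [euclid_norm_clm_apply, euclid_norm_self]
  rw [← Real.sqrt_sq hc, ← Real.sqrt_mul (sq_nonneg c)]
  exact Real.sqrt_le_sqrt (h (x 0) (x 1))

lemma le_opNorm_of (M : Matrix (Fin 2) (Fin 2) ℝ) (c x y : ℝ) (hc : 0 ≤ c)
    (hxy : 0 < x^2 + y^2)
    (h : c^2 * (x^2 + y^2) ≤ (M 0 0 * x + M 0 1 * y)^2 + (M 1 0 * x + M 1 1 * y)^2) :
    c ≤ opNorm M := by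
  set v : EuclideanSpace ℝ (Fin 2) := (WithLp.equiv 2 (Fin 2 → ℝ)).symm ![x, y] with hv
  have hv0 : v 0 = x := rfl
  have hv1 : v 1 = y := rfl
  have hle := (Matrix.toEuclideanCLM (𝕜 := ℝ) M).le_opNorm v
  rw [euclid_norm_clm_apply, euclid_norm_self, hv0, hv1] at hle
  have hnv : Real.sqrt (x^2+y^2) > 0 := Real.sqrt_pos.mpr hxy
  have h2 : c * Real.sqrt (x^2+y^2) ≤ opNorm M * Real.sqrt (x^2+y^2) := by
    calc c * Real.sqrt (x^2+y^2) = Real.sqrt (c^2 * (x^2+y^2)) := by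
          rw [Real.sqrt_mul (sq_nonneg c), Real.sqrt_sq hc]
      _ ≤ Real.sqrt ((M 0 0 * x + M 0 1 * y)^2 + (M 1 0 * x + M 1 1 * y)^2) :=
          Real.sqrt_le_sqrt h
      _ ≤ opNorm M * Real.sqrt (x^2+y^2) := hle
  exact le_of_mul_le_mul_right h2 hnv

set_option maxHeartbeats 4000000 in
lemma quadform (t11 t12 t22 x y : ℝ)
    (h11l : 0.0050182 ≤ t11) (h11u : t11 ≤ 0.0050212)
    (h12l : -0.5643055 ≤ t12) (h12u : t12 ≤ -0.564304)
    (h22l : 0.1564626 ≤ t22) (h22u : t22 ≤ 0.1564644) :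
    (t11 * x + t12 * y)^2 + (t12 * x + t22 * y)^2 ≤ 0.651^2 * (x^2 + y^2) := by
  have hsq12u : t12^2 ≤ 0.3184407 := by nlinarith
  have hsq12l : 0.3184390 ≤ t12^2 := by nlinarith
  have hsq11 : t11^2 ≤ 0.0000253 := by nlinarith
  have hsq22 : t22^2 ≤ 0.0244812 := by nlinarith
  have hp : 0.105334 ≤ 0.651^2 - t11^2 - t12^2 := by nlinarith
  have hr : 0.0808791 ≤ 0.651^2 - t12^2 - t22^2 := by nlinarith
  have hqu : -(t12*(t11+t22)) ≤ 0.0911273 := by nlinarith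
  have hq0 : 0 ≤ -(t12*(t11+t22)) := by nlinarith
  have hq2 : (t12*(t11+t22))^2 ≤ 0.0083042 := by nlinarith
  have hdet : 0 ≤ (0.651^2 - t11^2 - t12^2)*(0.651^2 - t12^2 - t22^2)
      - (t12*(t11+t22))^2 := by nlinarith
  nlinarith [hdet, hp, sq_nonneg ((0.651^2 - t11^2 - t12^2)*x - (t12*(t11+t22))*y),
    mul_nonneg hdet (sq_nonneg y)]


set_option maxHeartbeats 1000000 in
/-- counterexample to Question 1, with `g(x) = x + (x-1)⁺` and the concrete
`2×2` PSD matrices `A = [[9/10,0],[0,6/10]]`, `B = [[8/10,1/2],[1/2,4/10]]`: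
`‖g(A) - g(B)‖ < ‖g(|A - B|)‖` in operator norm. -/
theorem stmt3 :
    opNorm (matFun (fun x => x + max (x - 1) 0) !![(9:ℝ)/10, 0; 0, 6/10] -
        matFun (fun x => x + max (x - 1) 0) !![(8:ℝ)/10, 1/2; 1/2, 4/10]) <
      opNorm (matFun (fun x => x + max (x - 1) 0)
        (matAbs (!![(9:ℝ)/10, 0; 0, 6/10] - !![(8:ℝ)/10, 1/2; 1/2, 4/10]))) := by
  rw [habs, gS_eq, gA_eq, gB_eq]
  simp only [one_smul, zero_smul, add_zero]
  -- bounds on dd, aa, bb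
  have hdl : 1.077032 ≤ dd := by nlinarith [hd2, hd0]
  have hdu : dd ≤ 1.077034 := by nlinarith [hd2, hd0]
  have hdne : dd ≠ 0 := ne_of_gt hd0
  have hadd : aa * dd = 1.5 * dd - 0.4 := by
    simp only [aa]; field_simp; ring
  have hal : 1.128608 ≤ aa := by nlinarith [hadd, hdl, hdu, hd0]
  have hau : aa ≤ 1.128611 := by nlinarith [hadd, hdl, hdu, hd0]
  have hbl : -0.0079076 ≤ bb := by
    simp only [bb]; nlinarith [hdl, hdu, hal, hau]
  have hbu : bb ≤ -0.007907 := by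
    simp only [bb]; nlinarith [hdl, hdu, hal, hau]
  set t11 : ℝ := 9/10 - (8/10 * aa + bb) with ht11
  set t12 : ℝ := -(1/2 * aa) with ht12
  set t22 : ℝ := 6/10 - (4/10 * aa + bb) with ht22
  have hT : !![(9:ℝ)/10, 0; 0, 6/10] - (aa • !![(8:ℝ)/10, 1/2; 1/2, 4/10] + bb • 1) =
      !![t11, t12; t12, t22] := by
    ext i j
    fin_cases i <;> fin_cases j <;>
      simp [Matrix.sub_apply, Matrix.add_apply, Matrix.smul_apply, Matrix.one_apply,
        ht11, ht12, ht22] <;> ring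
  rw [hT]
  have h11l : 0.0050182 ≤ t11 := by rw [ht11]; linarith
  have h11u : t11 ≤ 0.0050212 := by rw [ht11]; linarith
  have h12l : -0.5643055 ≤ t12 := by rw [ht12]; linarith
  have h12u : t12 ≤ -0.564304 := by rw [ht12]; linarith
  have h22l : 0.1564626 ≤ t22 := by rw [ht22]; linarith
  have h22u : t22 ≤ 0.1564644 := by rw [ht22]; linarith
  have hLHS : opNorm !![t11, t12; t12, t22] ≤ 0.651 := by
    apply opNorm_le_of _ _ (by norm_num)
    intro x y
    show (t11 * x + t12 * y)^2 + (t12 * x + t22 * y)^2 ≤ 0.651^2 * (x^2 + y^2)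
    exact quadform t11 t12 t22 x y h11l h11u h12l h12u h22l h22u
  have hRHS : (0.652 : ℝ) ≤ opNorm Smat := by
    apply le_opNorm_of Smat 0.652 10 (-11) (by norm_num) (by norm_num)
    have hS00 : Smat 0 0 = eSq⁻¹ * (49/100) := by simp [Smat, Matrix.smul_apply]
    have hS01 : Smat 0 1 = eSq⁻¹ * (-(3/20)) := by simp [Smat, Matrix.smul_apply]
    have hS10 : Smat 1 0 = eSq⁻¹ * (-(3/20)) := by simp [Smat, Matrix.smul_apply]
    have hS11 : Smat 1 1 = eSq⁻¹ * (13/25) := by simp [Smat, Matrix.smul_apply]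
    rw [hS00, hS01, hS10, hS11]
    have hinv2 : (eSq⁻¹)^2 = 100/101 := by
      rw [← one_div, div_pow, one_pow, he2]; norm_num
    have hkey : (eSq⁻¹ * (49/100) * 10 + eSq⁻¹ * (-(3/20)) * (-11))^2
        + (eSq⁻¹ * (-(3/20)) * 10 + eSq⁻¹ * (13/25) * (-11))^2
        = (eSq⁻¹)^2 * (950309/10000) := by ring
    rw [hkey, hinv2]
    norm_num
  calc opNorm !![t11, t12; t12, t22] ≤ 0.651 := hLHS
    _ < 0.652 := by norm_num
    _ ≤ opNorm Smat := hRHS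
end
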